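/- Let f be a monic polynomial of degree n ≥ 2 over K all of whose roots z satisfy |z| ≤ 1, and let z_1 be any root of f. If every root w of f' satisfies |z_1 − w| > |n|^{-1/(n-1)}, then |f'(z_1)| > 1; but also |f'(z_1)| = ∏_{z root of f, z ≠ z_1 (with multiplicity)} |z_1 − z| ≤ 1, a contradiction. Formally: it is impossible that all roots w of f' satisfy |z_1 − w| > |n|^{-1/(n-1)}. -/

import Mathlib

open Polynomial

private lemma multiset_prod_le_one : ∀ (s : Multiset ℝ), (∀ x ∈ s, 0 ≤ x ∧ x ≤ 1) → s.prod ≤ 1 := by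
  intro s
  induction s using Multiset.induction with
  | empty => simp
  | cons a t ih =>
    intro h
    rw [Multiset.prod_cons]
    have ha := h a (by simp)
    have ht := ih (fun x hx => h x (by simp [hx]))
    have htnn : 0 ≤ t.prod := Multiset.prod_nonneg (fun x hx => (h x (by simp [hx])).1)
    calc a * t.prod ≤ 1 * 1 := mul_le_mul ha.2 ht htnn one_pos.le
      _ = 1 := by ring

private lemma multiset_pow_lt_prod {c : ℝ} (hc : 0 ≤ c) :
    ∀ (s : Multiset ℝ), s ≠ 0 → (∀ x ∈ s, c < x) → c ^ Multiset.card s < s.prod := by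
  intro s
  induction s using Multiset.induction with
  | empty => intro h; exact absurd rfl h
  | cons a t ih =>
    intro _ h
    rcases eq_or_ne t 0 with rfl | ht
    · simpa using h a (by simp)
    · have ha : c < a := h a (by simp)
      have ht' : c ^ Multiset.card t < t.prod := ih ht (fun x hx => h x (by simp [hx]))
      rw [Multiset.card_cons, Multiset.prod_cons, pow_succ, mul_comm (c ^ _) c]
      exact mul_lt_mul'' ha ht' hc (pow_nonneg hc _)

/-- Key step of the non-archimedean Sendov theorem: for a monic polynomial `f` of degree
`n ≥ 2` with all roots in the closed unit disk and a root `z₁` of `f`, it is impossible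
that every root `w` of `f'` satisfies `|z₁ - w| > |n|^{-1/(n-1)}`. -/
theorem sendov_key_contradiction {K : Type*} [Field K] [IsAlgClosed K] [CharZero K]
    (v : AbsoluteValue K ℝ) (hna : IsNonarchimedean v)
    (n : ℕ) (hn : 2 ≤ n) (f : Polynomial K) (hmonic : f.Monic)
    (hdeg : f.natDegree = n) (hroots : ∀ z : K, f.IsRoot z → v z ≤ 1)
    (z₁ : K) (hz₁ : f.IsRoot z₁) :
    ¬ ∀ w : K, (Polynomial.derivative f).IsRoot w →
        v ((n : K)) ^ (-(1 / ((n : ℝ) - 1))) < v (z₁ - w) := by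
  classical
  intro hall
  have hf0 : f ≠ 0 := hmonic.ne_zero
  have hnK : ((n : K)) ≠ 0 := Nat.cast_ne_zero.mpr (by omega)
  have hvn : 0 < v ((n : K)) := v.pos hnK
  set c : ℝ := v ((n : K)) ^ (-(1 / ((n : ℝ) - 1))) with hcdef
  have hcpos : 0 < c := Real.rpow_pos_of_pos hvn _
  have hz₁mem : z₁ ∈ f.roots := (mem_roots hf0).mpr hz₁
  -- Upper bound: v (f'(z₁)) ≤ 1
  have hupper : v ((derivative f).eval z₁) ≤ 1 := by
    have hfprod : f = (f.roots.map fun a => X - C a).prod :=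
      (IsAlgClosed.splits f).eq_prod_roots_of_monic hmonic
    have heval : (derivative f).eval z₁ =
        ((f.roots.erase z₁).map fun a => z₁ - a).prod := by
      conv_lhs => rw [hfprod]
      exact eval_multiset_prod_X_sub_C_derivative hz₁mem
    rw [heval, map_multiset_prod]
    apply multiset_prod_le_one
    intro x hx
    simp only [Multiset.mem_map] at hx
    obtain ⟨y, ⟨b, hb, rfl⟩, rfl⟩ := hx
    have hbroot : f.IsRoot b := isRoot_of_mem_roots (Multiset.mem_of_mem_erase hb)
    have h1 : v z₁ ≤ 1 := hroots _ hz₁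
    have h2 : v b ≤ 1 := hroots _ hbroot
    refine ⟨v.nonneg _, ?_⟩
    calc v (z₁ - b) ≤ max (v z₁) (v (-b)) := by
          simpa [sub_eq_add_neg] using hna z₁ (-b)
      _ ≤ 1 := by rw [v.map_neg]; exact max_le h1 h2
  -- Derivative facts
  have hdd : (derivative f).degree = ((n - 1 : ℕ) : WithBot ℕ) := by
    have := degree_derivative_eq f (by rw [hdeg]; omega)
    rwa [hdeg] at this
  have hdnat : (derivative f).natDegree = n - 1 := natDegree_eq_of_degree_eq_some hdd
  have hder0 : derivative f ≠ 0 := by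
    intro h
    rw [h, degree_zero] at hdd
    exact absurd hdd (by simp)
  have hcoeffd : (derivative f).coeff (n - 1) = (n : K) := by
    rw [coeff_derivative]
    have h1 : n - 1 + 1 = n := by omega
    rw [h1]
    have : f.coeff n = 1 := by
      rw [← hdeg]; exact hmonic.coeff_natDegree
    rw [this, one_mul, Nat.cast_sub (by omega : 1 ≤ n), Nat.cast_one]
    ring
  have hleadc : (derivative f).leadingCoeff = (n : K) := by
    rw [leadingCoeff, hdnat, hcoeffd]
  have hcard : Multiset.card (derivative f).roots = n - 1 := by
    rw [← hdnat]
    exact (splits_iff_card_roots.mp (IsAlgClosed.splits (derivative f)))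
  have hdprod : derivative f = C ((n : K)) * ((derivative f).roots.map fun a => X - C a).prod := by
    have := (IsAlgClosed.splits (derivative f)).eq_prod_roots
    rwa [hleadc] at this
  -- Lower bound: v (f'(z₁)) > 1
  set s : Multiset ℝ := (derivative f).roots.map fun a => v (z₁ - a) with hsdef
  have hscard : Multiset.card s = n - 1 := by rw [hsdef, Multiset.card_map, hcard]
  have hsne : s ≠ 0 := by
    intro h
    rw [h, Multiset.card_zero] at hscard
    omega
  have hsall : ∀ x ∈ s, c < x := by
    intro x hx
    rw [hsdef] at hx
    obtain ⟨w, hw, rfl⟩ := Multiset.mem_map.mp hx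
    exact hall w (isRoot_of_mem_roots hw)
  have hprod_lt : c ^ (n - 1) < s.prod := by
    have := multiset_pow_lt_prod hcpos.le s hsne hsall
    rwa [hscard] at this
  have hcn : v ((n : K)) * c ^ (n - 1) = 1 := by
    have hne : ((n : ℝ) - 1) ≠ 0 := by
      have : (2 : ℝ) ≤ (n : ℝ) := by exact_mod_cast hn
      linarith
    have h1 : c ^ (n - 1) = v ((n : K)) ^ ((-(1 / ((n : ℝ) - 1))) * ((n - 1 : ℕ) : ℝ)) := by
      rw [hcdef, ← Real.rpow_natCast (v ((n : K)) ^ _) (n - 1), ← Real.rpow_mul hvn.le]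
    have h2 : ((n - 1 : ℕ) : ℝ) = (n : ℝ) - 1 := by
      push_cast [Nat.cast_sub (by omega : 1 ≤ n)]
      ring
    rw [h1, h2]
    have h3 : (-(1 / ((n : ℝ) - 1))) * ((n : ℝ) - 1) = -1 := by
      field_simp
    rw [h3, Real.rpow_neg_one]
    exact mul_inv_cancel₀ hvn.ne'
  have heval2 : v ((derivative f).eval z₁) = v ((n : K)) * s.prod := by
    conv_lhs => rw [hdprod]
    rw [eval_mul, eval_C, map_mul, eval_multiset_prod, Multiset.map_map, map_multiset_prod,
      Multiset.map_map]
    congr 1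
    refine congrArg Multiset.prod (Multiset.map_congr rfl ?_)
    intro a _
    simp
  have hlow : 1 < v ((derivative f).eval z₁) := by
    rw [heval2, ← hcn]
    exact mul_lt_mul_of_pos_left hprod_lt hvn
  linarith
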